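/- Let N ≥ 1 and for each r ∈ {1,…,N} let μ_r be a finitely supported probability measure on ℝ, given by a probability vector a^r ∈ ℝ^{n_r} and points x^r : {1,…,n_r} → ℝ. For r, s ∈ {1,…,N} let W₂²(r,s) denote the infimum over P ∈ U(a^r, a^s) of ∑_{i,j} P_{ij} (x^r_i − x^s_j)². Then W₂² is conditionally negative definite: for all c ∈ ℝ^N with ∑_{r=1}^N c_r = 0, one has ∑_{r=1}^N ∑_{s=1}^N c_r c_s W₂²(r,s) ≤ 0. -/

import Mathlib

open Finset

/-- A probability vector: nonnegative entries summing to 1. -/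
def IsProbVec {n : ℕ} (a : Fin n → ℝ) : Prop :=
  (∀ i, 0 ≤ a i) ∧ ∑ i, a i = 1

/-- The transportation polytope `U(a,b)`. -/
def transportPolytope {n m : ℕ} (a : Fin n → ℝ) (b : Fin m → ℝ) :
    Set (Fin n → Fin m → ℝ) :=
  {P | (∀ i j, 0 ≤ P i j) ∧ (∀ i, ∑ j, P i j = a i) ∧ (∀ j, ∑ i, P i j = b j)}

noncomputable section CNDAux
open scoped Classical

/-- Partial sums. -/
def cumW (b : ℕ → ℝ) (m : ℕ) : ℝ := ∑ k ∈ Finset.range m, b k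

lemma cumW_zero (b : ℕ → ℝ) : cumW b 0 = 0 := by simp [cumW]

lemma cumW_succ (b : ℕ → ℝ) (m : ℕ) : cumW b (m+1) = cumW b m + b m := by
  simp [cumW, Finset.sum_range_succ]

lemma cumW_mono {b : ℕ → ℝ} (hb : ∀ k, 0 ≤ b k) : Monotone (cumW b) := by
  intro i j hij
  simpa [cumW] using Finset.sum_le_sum_of_subset_of_nonneg
    (Finset.range_subset_range.2 hij) (fun k _ _ => hb k)

lemma cumW_nonneg {b : ℕ → ℝ} (hb : ∀ k, 0 ≤ b k) (m : ℕ) : 0 ≤ cumW b m := by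
  simpa [cumW_zero] using cumW_mono hb (Nat.zero_le m)

/-- quantile index -/
def nidx (b : ℕ → ℝ) (n : ℕ) (t : ℝ) : ℕ :=
  Nat.findGreatest (fun m => cumW b m ≤ t) (n - 1)

lemma nidx_lt {n : ℕ} (hn : 1 ≤ n) (b : ℕ → ℝ) (t : ℝ) : nidx b n t < n := by
  unfold nidx
  exact lt_of_le_of_lt (Nat.findGreatest_le _) (by omega)

lemma nidx_le (b : ℕ → ℝ) (n : ℕ) (t : ℝ) (ht : 0 ≤ t) : cumW b (nidx b n t) ≤ t := by
  unfold nidx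
  exact Nat.findGreatest_spec (P := fun m => cumW b m ≤ t) (Nat.zero_le _)
    (by simpa [cumW_zero] using ht)

lemma nidx_lt_next {n : ℕ} {b : ℕ → ℝ} (hb : ∀ k, 0 ≤ b k) {t : ℝ}
    (htn : t < cumW b n) : t < cumW b (nidx b n t + 1) := by
  by_cases h : nidx b n t + 1 ≤ n - 1
  · by_contra hcon
    unfold nidx at *
    exact Nat.findGreatest_is_greatest (Nat.lt_succ_self _) h (not_lt.1 hcon)
  · have : n ≤ nidx b n t + 1 := by omega
    exact lt_of_lt_of_le htn (cumW_mono hb this)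

lemma nidx_eq {n : ℕ} {b : ℕ → ℝ} (hb : ∀ k, 0 ≤ b k) {k : ℕ} (hk : k < n) {t : ℝ}
    (h1 : cumW b k ≤ t) (h2 : t < cumW b (k+1)) : nidx b n t = k := by
  unfold nidx
  rw [Nat.findGreatest_eq_iff]
  refine ⟨by omega, fun _ => h1, fun m hm _ => ?_⟩
  have : cumW b (k+1) ≤ cumW b m := cumW_mono hb hm
  simp only [not_le]; linarith

lemma nidx_mono {n : ℕ} {b : ℕ → ℝ} {t t' : ℝ} (ht : 0 ≤ t) (htt : t ≤ t') :
    nidx b n t ≤ nidx b n t' := by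
  have h1 := nidx_le b n t ht
  unfold nidx at *
  exact Nat.le_findGreatest (P := fun m => cumW b m ≤ t') (Nat.findGreatest_le _)
    (le_trans h1 htt)

/-- clamp step identity -/
lemma clamp_step {a b u v : ℝ} (hab : a ≤ b) (huv : u ≤ v) :
    max 0 (min b v - max a u) = max a (min b v) - max a (min b u) := by
  rcases le_total v b with h1 | h1 <;> rcases le_total u a with h2 | h2 <;>
    rcases le_total v a with h3 | h3 <;> rcases le_total u b with h4 | h4 <;>
    simp [max_def, min_def] <;> split_ifs <;> linarith

lemma telescope {m : ℕ} {a b : ℝ} {D : ℕ → ℝ} (hD : ∀ j, D j ≤ D (j+1))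
    (hab : a ≤ b) (h0 : D 0 ≤ a) (hm : b ≤ D m) :
    ∑ j ∈ Finset.range m, max 0 (min b (D (j+1)) - max a (D j)) = b - a := by
  have key : ∀ j ∈ Finset.range m,
      max 0 (min b (D (j+1)) - max a (D j))
        = (fun j => max a (min b (D j))) (j+1) - (fun j => max a (min b (D j))) j := by
    intro j _; exact clamp_step hab (hD j)
  rw [Finset.sum_congr rfl key, Finset.sum_range_sub (fun j => max a (min b (D j)))]
  have hDm : b ≤ D m := hm
  have : max a (min b (D m)) = b := by
    rw [min_eq_left hDm, max_eq_right hab]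
  rw [this]
  have : max a (min b (D 0)) = a := by
    rw [max_eq_left (le_trans (min_le_right _ _) h0)]
  rw [this]

/-- cell mass of the monotone (quantile) coupling -/
def LL (b1 b2 : ℕ → ℝ) (k l : ℕ) : ℝ :=
  max 0 (min (cumW b1 (k+1)) (cumW b2 (l+1)) - max (cumW b1 k) (cumW b2 l))

lemma LL_nonneg (b1 b2 : ℕ → ℝ) (k l : ℕ) : 0 ≤ LL b1 b2 k l := le_max_left _ _

lemma LL_comm (b1 b2 : ℕ → ℝ) (k l : ℕ) : LL b1 b2 k l = LL b2 b1 l k := by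
  rw [LL, LL, min_comm (cumW b1 (k+1)), max_comm (cumW b1 k)]

lemma LL_rowsum {n1 n2 : ℕ} {b1 b2 : ℕ → ℝ} (hb1 : ∀ k, 0 ≤ b1 k) (hb2 : ∀ k, 0 ≤ b2 k)
    (hc1 : cumW b1 n1 = 1) (hc2 : cumW b2 n2 = 1) {k : ℕ} (hk : k < n1) :
    ∑ l ∈ Finset.range n2, LL b1 b2 k l = b1 k := by
  have h := telescope (m := n2) (a := cumW b1 k) (b := cumW b1 (k+1)) (D := cumW b2)
    (fun j => by simpa [cumW_succ] using hb2 j)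
    (by simpa [cumW_succ] using hb1 k)
    (by simpa [cumW_zero] using cumW_nonneg hb1 k)
    (hc2 ▸ (cumW_mono hb1 (by omega : k + 1 ≤ n1)).trans (le_of_eq hc1))
  simpa [LL, cumW_succ] using h

lemma LL_colsum {n1 n2 : ℕ} {b1 b2 : ℕ → ℝ} (hb1 : ∀ k, 0 ≤ b1 k) (hb2 : ∀ k, 0 ≤ b2 k)
    (hc1 : cumW b1 n1 = 1) (hc2 : cumW b2 n2 = 1) {l : ℕ} (hl : l < n2) :
    ∑ k ∈ Finset.range n1, LL b1 b2 k l = b2 l := by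
  have := LL_rowsum hb2 hb1 hc2 hc1 hl
  simpa [LL_comm b1 b2] using this

section Pair

variable (n1 n2 : ℕ) (b1 b2 y1 y2 : ℕ → ℝ)

/-- the value of the first quantile function at the jump points of the second -/
def rho (m : ℕ) : ℝ :=
  if cumW b2 (m+1) < 1 then y1 (nidx b1 n1 (cumW b2 (m+1))) else y1 (n1 - 1)

/-- dual potential on the second marginal (sorted indices) -/
def gpot (l : ℕ) : ℝ := 2 * ∑ m ∈ Finset.range l, rho n1 b1 b2 y1 m * (y2 (m+1) - y2 m)

/-- Legendre-type transform -/
def fpot (u : ℝ) : ℝ :=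
  if h : (Finset.range n2).Nonempty then
    Finset.sup' (Finset.range n2) h (fun l => 2 * u * y2 l - gpot n1 b1 b2 y1 y2 l)
  else 0

variable {n1 n2 b1 b2 y1 y2}

lemma fpot_ge (hn2 : 1 ≤ n2) {l : ℕ} (hl : l < n2) (u : ℝ) :
    2 * u * y2 l - gpot n1 b1 b2 y1 y2 l ≤ fpot n1 n2 b1 b2 y1 y2 u := by
  rw [fpot, dif_pos (Finset.nonempty_range_iff.2 (by omega))]
  exact Finset.le_sup' (fun l => 2 * u * y2 l - gpot n1 b1 b2 y1 y2 l)
    (Finset.mem_range.2 hl)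

/-- attainment of the Legendre transform at matched pairs -/
lemma fpot_attain (hn1 : 1 ≤ n1) (hn2 : 1 ≤ n2)
    (hb1 : ∀ k, 0 ≤ b1 k) (hb2 : ∀ k, 0 ≤ b2 k)
    (hc1 : cumW b1 n1 = 1) (hc2 : cumW b2 n2 = 1)
    (hy1 : Monotone y1) (hy2 : Monotone y2)
    {k l : ℕ} (hk : k < n1) (hl : l < n2)
    (hov : max (cumW b1 k) (cumW b2 l) < min (cumW b1 (k+1)) (cumW b2 (l+1))) :
    fpot n1 n2 b1 b2 y1 y2 (y1 k) + gpot n1 b1 b2 y1 y2 l ≤ 2 * y1 k * y2 l := by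
  set t := max (cumW b1 k) (cumW b2 l) with htdef
  have ht0 : 0 ≤ t := le_trans (cumW_nonneg hb1 k) (le_max_left _ _)
  have htb1 : cumW b1 k ≤ t := le_max_left _ _
  have htb2 : cumW b2 l ≤ t := le_max_right _ _
  have ht1' : t < cumW b1 (k+1) := lt_of_lt_of_le hov (min_le_left _ _)
  have ht2' : t < cumW b2 (l+1) := lt_of_lt_of_le hov (min_le_right _ _)
  have ht1 : t < 1 := lt_of_lt_of_le ht1' (hc1 ▸ cumW_mono hb1 (by omega : k+1 ≤ n1))
  -- it suffices to bound each candidate in the sup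
  rw [fpot, dif_pos (Finset.nonempty_range_iff.2 (by omega)), ← le_sub_iff_add_le,
    Finset.sup'_le_iff]
  intro l' hl'
  rw [Finset.mem_range] at hl'
  -- goal : 2 * y1 k * y2 l' - gpot .. l' ≤ 2 * y1 k * y2 l - gpot .. l
  have key : ∀ m, l ≤ m → m < n2 → y1 k ≤ rho n1 b1 b2 y1 m := by
    intro m hm _
    have hcs : t < cumW b2 (m+1) := lt_of_lt_of_le ht2' (cumW_mono hb2 (by omega))
    rw [rho]
    split_ifs with h
    · have : k ≤ nidx b1 n1 (cumW b2 (m+1)) := by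
        have : nidx b1 n1 t ≤ nidx b1 n1 (cumW b2 (m+1)) := nidx_mono ht0 (le_of_lt hcs)
        rwa [nidx_eq hb1 hk htb1 ht1'] at this
      exact hy1 this
    · exact hy1 (by omega)
  have key2 : ∀ m, m < l → y1 k ≥ rho n1 b1 b2 y1 m := by
    intro m hm
    have hcs : cumW b2 (m+1) ≤ t := le_trans (cumW_mono hb2 (by omega : m+1 ≤ l)) htb2
    have hcs1 : cumW b2 (m+1) < 1 := lt_of_le_of_lt hcs ht1
    rw [rho, if_pos hcs1]
    have : nidx b1 n1 (cumW b2 (m+1)) ≤ k := by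
      have h := nidx_mono (b := b1) (n := n1) (cumW_nonneg hb2 (m+1)) hcs
      rwa [nidx_eq hb1 hk htb1 ht1'] at h
    exact hy1 this
  rcases lt_trichotomy l' l with h | h | h
  · -- l' < l : g l - g l' = 2 * sum over [l', l)
    have hsplit : gpot n1 b1 b2 y1 y2 l - gpot n1 b1 b2 y1 y2 l' =
        2 * ∑ m ∈ Finset.Ico l' l, rho n1 b1 b2 y1 m * (y2 (m+1) - y2 m) := by
      rw [gpot, gpot, ← mul_sub, ← Finset.sum_Ico_eq_sub _ (le_of_lt h)]
    have hbound : ∑ m ∈ Finset.Ico l' l, rho n1 b1 b2 y1 m * (y2 (m+1) - y2 m)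
        ≤ ∑ m ∈ Finset.Ico l' l, y1 k * (y2 (m+1) - y2 m) := by
      refine Finset.sum_le_sum fun m hm => ?_
      rw [Finset.mem_Ico] at hm
      have h1 := key2 m hm.2
      have h2 : y2 m ≤ y2 (m+1) := hy2 (by omega)
      nlinarith
    have htel : ∑ m ∈ Finset.Ico l' l, y1 k * (y2 (m+1) - y2 m) = y1 k * (y2 l - y2 l') := by
      rw [← Finset.mul_sum, Finset.sum_Ico_eq_sub _ (le_of_lt h)]
      congr 1
      rw [Finset.sum_range_sub (fun m => y2 m), Finset.sum_range_sub (fun m => y2 m)]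
      ring
    rw [htel] at hbound
    nlinarith [hsplit, hbound]
  · subst h; linarith
  · -- l < l'
    have hsplit : gpot n1 b1 b2 y1 y2 l' - gpot n1 b1 b2 y1 y2 l =
        2 * ∑ m ∈ Finset.Ico l l', rho n1 b1 b2 y1 m * (y2 (m+1) - y2 m) := by
      rw [gpot, gpot, ← mul_sub, ← Finset.sum_Ico_eq_sub _ (le_of_lt h)]
    have hbound : ∑ m ∈ Finset.Ico l l', y1 k * (y2 (m+1) - y2 m)
        ≤ ∑ m ∈ Finset.Ico l l', rho n1 b1 b2 y1 m * (y2 (m+1) - y2 m) := by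
      refine Finset.sum_le_sum fun m hm => ?_
      rw [Finset.mem_Ico] at hm
      have h1 := key m hm.1 (by omega)
      have h2 : y2 m ≤ y2 (m+1) := hy2 (by omega)
      nlinarith
    have htel : ∑ m ∈ Finset.Ico l l', y1 k * (y2 (m+1) - y2 m) = y1 k * (y2 l' - y2 l) := by
      rw [← Finset.mul_sum, Finset.sum_Ico_eq_sub _ (le_of_lt h)]
      congr 1
      rw [Finset.sum_range_sub (fun m => y2 m), Finset.sum_range_sub (fun m => y2 m)]
      ring
    rw [htel] at hbound
    nlinarith [hsplit, hbound]

end Pair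


/-- sorted weights, extended to ℕ -/
def swt {n : ℕ} (a : Fin n → ℝ) (x : Fin n → ℝ) : ℕ → ℝ :=
  fun k => if h : k < n then a (Tuple.sort x ⟨k, h⟩) else 0

/-- sorted points, extended to ℕ -/
def spt {n : ℕ} (x : Fin n → ℝ) : ℕ → ℝ :=
  fun k => if h : min k (n-1) < n then x (Tuple.sort x ⟨min k (n-1), h⟩) else 0

lemma swt_nonneg {n : ℕ} {a x : Fin n → ℝ} (ha : ∀ i, 0 ≤ a i) (k : ℕ) :
    0 ≤ swt a x k := by
  rw [swt]; split_ifs with h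
  · exact ha _
  · exact le_refl _

lemma swt_eq {n : ℕ} (a x : Fin n → ℝ) (i : Fin n) : swt a x (i : ℕ) = a (Tuple.sort x i) := by
  rw [swt, dif_pos i.isLt]

lemma spt_eq {n : ℕ} (hn : 1 ≤ n) (x : Fin n → ℝ) (i : Fin n) :
    spt x (i : ℕ) = x (Tuple.sort x i) := by
  have h1 : min (i : ℕ) (n-1) = (i : ℕ) := min_eq_left (by omega)
  rw [spt]
  simp only [h1]
  rw [dif_pos i.isLt]

lemma spt_mono {n : ℕ} (hn : 1 ≤ n) (x : Fin n → ℝ) : Monotone (spt x) := by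
  intro k k' hkk
  have h1 : min k (n-1) < n := by omega
  have h2 : min k' (n-1) < n := by omega
  rw [spt, spt, dif_pos h1, dif_pos h2]
  exact Tuple.monotone_sort x (by simp [Fin.mk_le_mk]; omega)


lemma cumW_swt {n : ℕ} {a x : Fin n → ℝ} (ha : ∑ i, a i = 1) : cumW (swt a x) n = 1 := by
  rw [cumW, ← Fin.sum_univ_eq_sum_range (fun k => swt a x k) n]
  rw [Finset.sum_congr rfl (fun i _ => swt_eq a x i)]
  rw [Equiv.sum_comp (Tuple.sort x) a]
  exact ha

lemma pair_isLeast {n1 n2 : ℕ} (hn1 : 1 ≤ n1) (hn2 : 1 ≤ n2)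
    {a1 : Fin n1 → ℝ} {a2 : Fin n2 → ℝ} (ha1 : IsProbVec a1) (ha2 : IsProbVec a2)
    (x1 : Fin n1 → ℝ) (x2 : Fin n2 → ℝ) :
    IsLeast ((fun P => ∑ i, ∑ j, P i j * (x1 i - x2 j) ^ 2) '' transportPolytope a1 a2)
      (∑ k ∈ Finset.range n1, ∑ l ∈ Finset.range n2,
        LL (swt a1 x1) (swt a2 x2) k l * (spt x1 k - spt x2 l) ^ 2) := by
  obtain ⟨ha1n, ha1s⟩ := ha1
  obtain ⟨ha2n, ha2s⟩ := ha2
  set b1 := swt a1 x1 with hb1def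
  set b2 := swt a2 x2 with hb2def
  set y1 := spt x1 with hy1def
  set y2 := spt x2 with hy2def
  have hb1 : ∀ k, 0 ≤ b1 k := swt_nonneg ha1n
  have hb2 : ∀ k, 0 ≤ b2 k := swt_nonneg ha2n
  have hc1 : cumW b1 n1 = 1 := cumW_swt ha1s
  have hc2 : cumW b2 n2 = 1 := cumW_swt ha2s
  have hy1 : Monotone y1 := spt_mono hn1 x1
  have hy2 : Monotone y2 := spt_mono hn2 x2
  set π1 := Tuple.sort x1 with hπ1def
  set π2 := Tuple.sort x2 with hπ2def
  have hb1e : ∀ i : Fin n1, b1 (i : ℕ) = a1 (π1 i) := fun i => swt_eq a1 x1 i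
  have hb2e : ∀ j : Fin n2, b2 (j : ℕ) = a2 (π2 j) := fun j => swt_eq a2 x2 j
  have hy1e : ∀ i : Fin n1, y1 (i : ℕ) = x1 (π1 i) := fun i => spt_eq hn1 x1 i
  have hy2e : ∀ j : Fin n2, y2 (j : ℕ) = x2 (π2 j) := fun j => spt_eq hn2 x2 j
  constructor
  · -- membership : the monotone coupling
    refine ⟨fun i j => LL b1 b2 (π1.symm i) (π2.symm j), ⟨fun i j => LL_nonneg _ _ _ _, ?_, ?_⟩, ?_⟩
    · intro i
      have h1 : ∑ j : Fin n2, LL b1 b2 ((π1.symm i : Fin n1) : ℕ) ((π2.symm j : Fin n2) : ℕ)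
          = ∑ j : Fin n2, LL b1 b2 ((π1.symm i : Fin n1) : ℕ) (j : ℕ) :=
        Equiv.sum_comp π2.symm (fun j : Fin n2 => LL b1 b2 ((π1.symm i : Fin n1) : ℕ) (j : ℕ))
      rw [h1, Fin.sum_univ_eq_sum_range (fun l => LL b1 b2 ((π1.symm i : Fin n1) : ℕ) l) n2,
        LL_rowsum hb1 hb2 hc1 hc2 (π1.symm i).isLt, hb1e, Equiv.apply_symm_apply]
    · intro j
      have h1 : ∑ i : Fin n1, LL b1 b2 ((π1.symm i : Fin n1) : ℕ) ((π2.symm j : Fin n2) : ℕ)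
          = ∑ i : Fin n1, LL b1 b2 ((i : Fin n1) : ℕ) ((π2.symm j : Fin n2) : ℕ) :=
        Equiv.sum_comp π1.symm (fun i : Fin n1 => LL b1 b2 (i : ℕ) ((π2.symm j : Fin n2) : ℕ))
      rw [h1, Fin.sum_univ_eq_sum_range (fun k => LL b1 b2 k ((π2.symm j : Fin n2) : ℕ)) n1,
        LL_colsum hb1 hb2 hc1 hc2 (π2.symm j).isLt, hb2e, Equiv.apply_symm_apply]
    · -- cost of the monotone coupling equals M
      dsimp only
      have h1 : ∑ i, ∑ j, LL b1 b2 ((π1.symm i : Fin n1) : ℕ) ((π2.symm j : Fin n2) : ℕ)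
            * (x1 i - x2 j) ^ 2
          = ∑ k : Fin n1, ∑ l : Fin n2, LL b1 b2 (k : ℕ) (l : ℕ) * (x1 (π1 k) - x2 (π2 l)) ^ 2 := by
        rw [← Equiv.sum_comp π1 (fun i => ∑ j, LL b1 b2 ((π1.symm i : Fin n1) : ℕ)
          ((π2.symm j : Fin n2) : ℕ) * (x1 i - x2 j) ^ 2)]
        refine Finset.sum_congr rfl fun k _ => ?_
        rw [← Equiv.sum_comp π2 (fun j => LL b1 b2 ((π1.symm (π1 k) : Fin n1) : ℕ)
          ((π2.symm j : Fin n2) : ℕ) * (x1 (π1 k) - x2 j) ^ 2)]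
        simp only [Equiv.symm_apply_apply]
      rw [h1]
      rw [← Fin.sum_univ_eq_sum_range (fun k => ∑ l ∈ Finset.range n2,
        LL b1 b2 k l * (y1 k - y2 l) ^ 2) n1]
      refine Finset.sum_congr rfl fun k _ => ?_
      rw [← Fin.sum_univ_eq_sum_range (fun l => LL b1 b2 (k : ℕ) l * (y1 (k : ℕ) - y2 l) ^ 2) n2]
      refine Finset.sum_congr rfl fun l _ => ?_
      rw [hy1e, hy2e]
  · -- lower bound via duality
    rintro v ⟨Q, ⟨hQ0, hQr, hQc⟩, rfl⟩
    dsimp only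
    set f : ℝ → ℝ := fpot n1 n2 b1 b2 y1 y2 with hfdef
    set φ : Fin n1 → ℝ := fun i => (x1 i) ^ 2 - f (x1 i) with hφ
    have hne1 : (Finset.univ : Finset (Fin n1)).Nonempty := ⟨⟨0, hn1⟩, Finset.mem_univ _⟩
    set ψ : Fin n2 → ℝ := fun j =>
      Finset.inf' Finset.univ hne1 (fun i => (x1 i - x2 j) ^ 2 - φ i) with hψ
    have hcon : ∀ i j, φ i + ψ j ≤ (x1 i - x2 j) ^ 2 := by
      intro i j
      have h := Finset.inf'_le (b := i) (fun i => (x1 i - x2 j) ^ 2 - φ i) (Finset.mem_univ i)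
      have : ψ j ≤ (x1 i - x2 j) ^ 2 - φ i := h
      linarith
    have step1 : ∑ i, a1 i * φ i + ∑ j, a2 j * ψ j ≤ ∑ i, ∑ j, Q i j * (x1 i - x2 j) ^ 2 := by
      have e0 : ∑ i, ∑ j, Q i j * (φ i + ψ j) = ∑ i, a1 i * φ i + ∑ j, a2 j * ψ j := by
        simp_rw [mul_add, Finset.sum_add_distrib]
        congr 1
        · refine Finset.sum_congr rfl fun i _ => ?_
          rw [← Finset.sum_mul, hQr i]
        · rw [Finset.sum_comm]
          refine Finset.sum_congr rfl fun j _ => ?_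
          rw [← Finset.sum_mul, hQc j]
      rw [← e0]
      refine Finset.sum_le_sum fun i _ => Finset.sum_le_sum fun j _ => ?_
      exact mul_le_mul_of_nonneg_left (hcon i j) (hQ0 i j)
    have e21 : ∑ i, a1 i * φ i
        = ∑ k ∈ Finset.range n1, b1 k * (y1 k ^ 2 - f (y1 k)) := by
      rw [← Fin.sum_univ_eq_sum_range (fun k => b1 k * (y1 k ^ 2 - f (y1 k))) n1]
      rw [← Equiv.sum_comp π1 (fun i => a1 i * φ i)]
      refine Finset.sum_congr rfl fun k _ => ?_
      rw [hb1e, hy1e, hφ]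
    have e22 : ∑ l ∈ Finset.range n2, b2 l * (y2 l ^ 2 - gpot n1 b1 b2 y1 y2 l)
        ≤ ∑ j, a2 j * ψ j := by
      rw [← Equiv.sum_comp π2 (fun j => a2 j * ψ j)]
      rw [← Fin.sum_univ_eq_sum_range (fun l => b2 l * (y2 l ^ 2 - gpot n1 b1 b2 y1 y2 l)) n2]
      refine Finset.sum_le_sum fun l _ => ?_
      rw [← hb2e]
      refine mul_le_mul_of_nonneg_left ?_ (hb2 l)
      simp only [hψ]
      refine Finset.le_inf' hne1 _ fun i _ => ?_
      have hf : 2 * (x1 i) * y2 (l : ℕ) - gpot n1 b1 b2 y1 y2 (l : ℕ) ≤ f (x1 i) :=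
        fpot_ge hn2 l.isLt (x1 i)
      rw [← hy2e l]
      simp only [hφ]
      nlinarith [hf]
    have step3 : ∑ k ∈ Finset.range n1, ∑ l ∈ Finset.range n2, LL b1 b2 k l * (y1 k - y2 l) ^ 2
        ≤ ∑ k ∈ Finset.range n1, b1 k * (y1 k ^ 2 - f (y1 k))
          + ∑ l ∈ Finset.range n2, b2 l * (y2 l ^ 2 - gpot n1 b1 b2 y1 y2 l) := by
      have hr : ∑ k ∈ Finset.range n1, b1 k * (y1 k ^ 2 - f (y1 k))
          = ∑ k ∈ Finset.range n1, ∑ l ∈ Finset.range n2,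
            LL b1 b2 k l * (y1 k ^ 2 - f (y1 k)) := by
        refine Finset.sum_congr rfl fun k hk => ?_
        rw [← Finset.sum_mul, LL_rowsum hb1 hb2 hc1 hc2 (Finset.mem_range.1 hk)]
      have hcol : ∑ l ∈ Finset.range n2, b2 l * (y2 l ^ 2 - gpot n1 b1 b2 y1 y2 l)
          = ∑ l ∈ Finset.range n2, ∑ k ∈ Finset.range n1,
            LL b1 b2 k l * (y2 l ^ 2 - gpot n1 b1 b2 y1 y2 l) := by
        refine Finset.sum_congr rfl fun l hl => ?_
        rw [← Finset.sum_mul, LL_colsum hb1 hb2 hc1 hc2 (Finset.mem_range.1 hl)]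
      have hswap : ∑ l ∈ Finset.range n2, ∑ k ∈ Finset.range n1,
            LL b1 b2 k l * (y2 l ^ 2 - gpot n1 b1 b2 y1 y2 l)
          = ∑ k ∈ Finset.range n1, ∑ l ∈ Finset.range n2,
            LL b1 b2 k l * (y2 l ^ 2 - gpot n1 b1 b2 y1 y2 l) :=
        Finset.sum_comm
      rw [hr, hcol, hswap, ← Finset.sum_add_distrib]
      refine Finset.sum_le_sum fun k hk => ?_
      rw [← Finset.sum_add_distrib]
      refine Finset.sum_le_sum fun l hl => ?_
      rcases (LL_nonneg b1 b2 k l).eq_or_lt with h | h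
      · rw [← h]; simp
      · have hov : max (cumW b1 k) (cumW b2 l) < min (cumW b1 (k+1)) (cumW b2 (l+1)) := by
          by_contra hcon2
          have : min (cumW b1 (k+1)) (cumW b2 (l+1)) - max (cumW b1 k) (cumW b2 l) ≤ 0 := by
            push_neg at hcon2; linarith
          have : LL b1 b2 k l ≤ 0 := by rw [LL]; exact max_le (le_refl 0) this
          linarith
        have hat := fpot_attain hn1 hn2 hb1 hb2 hc1 hc2 hy1 hy2
          (Finset.mem_range.1 hk) (Finset.mem_range.1 hl) hov
        rw [← hfdef] at hat
        nlinarith [hat, le_of_lt h]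
    linarith [step1, e21, e22, step3]

open MeasureTheory in
lemma integral_indicator_Ico (A B : ℝ) (c : ℝ) :
    ∫ t : ℝ, Set.indicator (Set.Ico A B) (fun _ => c) t = max 0 (B - A) * c := by
  rw [MeasureTheory.integral_indicator measurableSet_Ico]
  rw [MeasureTheory.setIntegral_const, measureReal_def, Real.volume_Ico]
  rcases le_total (B - A) 0 with h | h
  · rw [ENNReal.ofReal_of_nonpos h]
    simp [max_eq_left h]
  · rw [ENNReal.toReal_ofReal h]
    rw [max_eq_right h]
    simp [smul_eq_mul]

open MeasureTheory in
lemma integrable_indicator_Ico (A B : ℝ) (c : ℝ) :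
    Integrable (fun t : ℝ => Set.indicator (Set.Ico A B) (fun _ => c) t) := by
  rw [MeasureTheory.integrable_indicator_iff measurableSet_Ico]
  refine (MeasureTheory.integrableOn_const_iff (C := c) (by simp)).2 (Or.inr ?_)
  rw [Real.volume_Ico]
  exact ENNReal.ofReal_lt_top

/-- the quantile step function -/
def QF (n : ℕ) (b y : ℕ → ℝ) (t : ℝ) : ℝ :=
  ∑ k ∈ Finset.range n, Set.indicator (Set.Ico (cumW b k) (cumW b (k+1))) (fun _ => y k) t

/-- the pair step function -/
def SS (n1 n2 : ℕ) (b1 b2 y1 y2 : ℕ → ℝ) (t : ℝ) : ℝ :=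
  ∑ k ∈ Finset.range n1, ∑ l ∈ Finset.range n2,
    Set.indicator (Set.Ico (max (cumW b1 k) (cumW b2 l))
      (min (cumW b1 (k+1)) (cumW b2 (l+1)))) (fun _ => (y1 k - y2 l)^2) t

open MeasureTheory in
lemma SS_integrable (n1 n2 : ℕ) (b1 b2 y1 y2 : ℕ → ℝ) :
    Integrable (SS n1 n2 b1 b2 y1 y2) := by
  refine MeasureTheory.integrable_finset_sum _ fun k _ => ?_
  exact MeasureTheory.integrable_finset_sum _ fun l _ => integrable_indicator_Ico _ _ _

open MeasureTheory in
lemma SS_integral (n1 n2 : ℕ) (b1 b2 y1 y2 : ℕ → ℝ) :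
    ∫ t : ℝ, SS n1 n2 b1 b2 y1 y2 t
      = ∑ k ∈ Finset.range n1, ∑ l ∈ Finset.range n2, LL b1 b2 k l * (y1 k - y2 l)^2 := by
  unfold SS
  rw [MeasureTheory.integral_finset_sum _
    (fun k _ => MeasureTheory.integrable_finset_sum _ fun l _ => integrable_indicator_Ico _ _ _)]
  refine Finset.sum_congr rfl fun k _ => ?_
  rw [MeasureTheory.integral_finset_sum _ (fun l _ => integrable_indicator_Ico _ _ _)]
  refine Finset.sum_congr rfl fun l _ => ?_
  rw [integral_indicator_Ico]
  rw [LL]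

lemma SS_pointwise {n1 n2 : ℕ} {b1 b2 y1 y2 : ℕ → ℝ} (hn1 : 1 ≤ n1) (hn2 : 1 ≤ n2)
    (hb1 : ∀ k, 0 ≤ b1 k) (hb2 : ∀ k, 0 ≤ b2 k)
    (hc1 : cumW b1 n1 = 1) (hc2 : cumW b2 n2 = 1) (t : ℝ) :
    SS n1 n2 b1 b2 y1 y2 t = (QF n1 b1 y1 t - QF n2 b2 y2 t)^2 := by
  by_cases ht : 0 ≤ t ∧ t < 1
  · obtain ⟨ht0, ht1⟩ := ht
    have ht1' : t < cumW b1 n1 := by rw [hc1]; exact ht1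
    have ht2' : t < cumW b2 n2 := by rw [hc2]; exact ht1
    set k0 := nidx b1 n1 t with hk0
    set l0 := nidx b2 n2 t with hl0
    have hQ1 : QF n1 b1 y1 t = y1 k0 := by
      unfold QF
      rw [Finset.sum_eq_single k0]
      · exact Set.indicator_of_mem (Set.mem_Ico.2 ⟨nidx_le b1 n1 t ht0, nidx_lt_next hb1 ht1'⟩) _
      · intro k hk hne
        refine Set.indicator_of_notMem (fun hmem => hne ?_) _
        exact (nidx_eq hb1 (Finset.mem_range.1 hk) (Set.mem_Ico.1 hmem).1 (Set.mem_Ico.1 hmem).2).symm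
      · intro hk
        exact absurd (Finset.mem_range.2 (nidx_lt hn1 b1 t)) hk
    have hQ2 : QF n2 b2 y2 t = y2 l0 := by
      unfold QF
      rw [Finset.sum_eq_single l0]
      · exact Set.indicator_of_mem (Set.mem_Ico.2 ⟨nidx_le b2 n2 t ht0, nidx_lt_next hb2 ht2'⟩) _
      · intro l hl hne
        refine Set.indicator_of_notMem (fun hmem => hne ?_) _
        exact (nidx_eq hb2 (Finset.mem_range.1 hl) (Set.mem_Ico.1 hmem).1 (Set.mem_Ico.1 hmem).2).symm
      · intro hl
        exact absurd (Finset.mem_range.2 (nidx_lt hn2 b2 t)) hl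
    rw [hQ1, hQ2]
    unfold SS
    rw [Finset.sum_eq_single k0]
    · rw [Finset.sum_eq_single l0]
      · refine Set.indicator_of_mem (Set.mem_Ico.2 ⟨?_, ?_⟩) _
        · exact max_le (nidx_le b1 n1 t ht0) (nidx_le b2 n2 t ht0)
        · exact lt_min (nidx_lt_next hb1 ht1') (nidx_lt_next hb2 ht2')
      · intro l hl hne
        refine Set.indicator_of_notMem (fun hmem => hne ?_) _
        have h2 : cumW b2 l ≤ t ∧ t < cumW b2 (l+1) :=
          ⟨le_trans (le_max_right _ _) (Set.mem_Ico.1 hmem).1, lt_of_lt_of_le (Set.mem_Ico.1 hmem).2 (min_le_right _ _)⟩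
        exact (nidx_eq hb2 (Finset.mem_range.1 hl) h2.1 h2.2).symm
      · intro hl
        exact absurd (Finset.mem_range.2 (nidx_lt hn2 b2 t)) hl
    · intro k hk hne
      refine Finset.sum_eq_zero fun l hl => ?_
      refine Set.indicator_of_notMem (fun hmem => hne ?_) _
      have h1 : cumW b1 k ≤ t ∧ t < cumW b1 (k+1) :=
        ⟨le_trans (le_max_left _ _) (Set.mem_Ico.1 hmem).1, lt_of_lt_of_le (Set.mem_Ico.1 hmem).2 (min_le_left _ _)⟩
      exact (nidx_eq hb1 (Finset.mem_range.1 hk) h1.1 h1.2).symm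
    · intro hk
      exact absurd (Finset.mem_range.2 (nidx_lt hn1 b1 t)) hk
  · -- t outside [0,1)
    have hout1 : ∀ (n : ℕ) (b y : ℕ → ℝ), (∀ k, 0 ≤ b k) → cumW b n = 1 →
        QF n b y t = 0 := by
      intro n b y hb hcn
      refine Finset.sum_eq_zero fun k hk => ?_
      refine Set.indicator_of_notMem (fun hmem => ht ?_) _
      constructor
      · exact le_trans (cumW_nonneg hb k) (Set.mem_Ico.1 hmem).1
      · calc t < cumW b (k+1) := (Set.mem_Ico.1 hmem).2
          _ ≤ cumW b n := cumW_mono hb (Finset.mem_range.1 hk)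
          _ = 1 := hcn
    have hS : SS n1 n2 b1 b2 y1 y2 t = 0 := by
      refine Finset.sum_eq_zero fun k hk => Finset.sum_eq_zero fun l hl => ?_
      refine Set.indicator_of_notMem (fun hmem => ht ?_) _
      constructor
      · exact le_trans (le_trans (cumW_nonneg hb1 k) (le_max_left _ _)) (Set.mem_Ico.1 hmem).1
      · calc t < min (cumW b1 (k+1)) (cumW b2 (l+1)) := (Set.mem_Ico.1 hmem).2
          _ ≤ cumW b1 (k+1) := min_le_left _ _
          _ ≤ cumW b1 n1 := cumW_mono hb1 (Finset.mem_range.1 hk)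
          _ = 1 := hc1
    rw [hS, hout1 n1 b1 y1 hb1 hc1, hout1 n2 b2 y2 hb2 hc2]
    ring

lemma cnd_pointwise {N : ℕ} (c q : Fin N → ℝ) (hc : ∑ r, c r = 0) :
    ∑ r, ∑ s, c r * c s * (q r - q s) ^ 2 = -2 * (∑ r, c r * q r) ^ 2 := by
  have expand : ∑ r, ∑ s, c r * c s * (q r - q s) ^ 2
      = ∑ r, ∑ s, ((c s * (c r * q r ^ 2) + c r * (c s * q s ^ 2))
          - 2 * ((c r * q r) * (c s * q s))) :=
    Finset.sum_congr rfl fun r _ => Finset.sum_congr rfl fun s _ => by ring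
  have h1 : ∑ r, ∑ s, c s * (c r * q r ^ 2) = 0 := by
    refine Finset.sum_eq_zero fun r _ => ?_
    rw [← Finset.sum_mul, hc, zero_mul]
  have h2 : ∑ r : Fin N, ∑ s : Fin N, c r * (c s * q s ^ 2) = 0 := by
    rw [Finset.sum_comm]
    refine Finset.sum_eq_zero fun s _ => ?_
    rw [← Finset.sum_mul, hc, zero_mul]
  have h3 : ∑ r, ∑ s, 2 * ((c r * q r) * (c s * q s))
      = 2 * ((∑ r, c r * q r) * (∑ s, c s * q s)) := by
    rw [Finset.sum_mul_sum, Finset.mul_sum]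
    refine Finset.sum_congr rfl fun r _ => ?_
    rw [Finset.mul_sum]
  have h4 : ∑ r, ∑ s, ((c s * (c r * q r ^ 2) + c r * (c s * q s ^ 2))
          - 2 * ((c r * q r) * (c s * q s)))
      = (∑ r, ∑ s, c s * (c r * q r ^ 2)) + (∑ r : Fin N, ∑ s : Fin N, c r * (c s * q s ^ 2))
        - ∑ r, ∑ s, 2 * ((c r * q r) * (c s * q s)) := by
    rw [← Finset.sum_add_distrib, ← Finset.sum_sub_distrib]
    refine Finset.sum_congr rfl fun r _ => ?_
    rw [← Finset.sum_add_distrib, ← Finset.sum_sub_distrib]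
  rw [expand, h4, h1, h2, h3]
  ring


theorem stmt8 (N : ℕ) (hN : 1 ≤ N)
    (n : Fin N → ℕ) (hn : ∀ r, 1 ≤ n r)
    (a : (r : Fin N) → Fin (n r) → ℝ) (ha : ∀ r, IsProbVec (a r))
    (x : (r : Fin N) → Fin (n r) → ℝ)
    (W2sq : Fin N → Fin N → ℝ)
    (hW : ∀ r s, W2sq r s =
      sInf ((fun P => ∑ i, ∑ j, P i j * (x r i - x s j) ^ 2) ''
        transportPolytope (a r) (a s)))
    (c : Fin N → ℝ) (hc : ∑ r, c r = 0) :
    ∑ r, ∑ s, c r * c s * W2sq r s ≤ 0 := by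
  set B : (r : Fin N) → ℕ → ℝ := fun r => swt (a r) (x r) with hB
  set Y : (r : Fin N) → ℕ → ℝ := fun r => spt (x r) with hY
  have hBnn : ∀ r k, 0 ≤ B r k := fun r k => swt_nonneg (ha r).1 k
  have hBc : ∀ r, cumW (B r) (n r) = 1 := fun r => cumW_swt (ha r).2
  have hWint : ∀ r s, W2sq r s = ∫ t : ℝ, SS (n r) (n s) (B r) (B s) (Y r) (Y s) t := by
    intro r s
    rw [hW r s, (pair_isLeast (hn r) (hn s) (ha r) (ha s) (x r) (x s)).csInf_eq,
      SS_integral]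
  have hint : ∀ r s : Fin N,
      MeasureTheory.Integrable (fun t => c r * c s * SS (n r) (n s) (B r) (B s) (Y r) (Y s) t) :=
    fun r s => (SS_integrable (n r) (n s) (B r) (B s) (Y r) (Y s)).const_mul _
  calc ∑ r, ∑ s, c r * c s * W2sq r s
      = ∑ r, ∑ s, ∫ t : ℝ, c r * c s * SS (n r) (n s) (B r) (B s) (Y r) (Y s) t := by
        refine Finset.sum_congr rfl fun r _ => Finset.sum_congr rfl fun s _ => ?_
        rw [hWint r s, MeasureTheory.integral_const_mul]
    _ = ∫ t : ℝ, ∑ r, ∑ s, c r * c s * SS (n r) (n s) (B r) (B s) (Y r) (Y s) t := by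
        rw [MeasureTheory.integral_finset_sum _
          (fun r _ => MeasureTheory.integrable_finset_sum _ fun s _ => hint r s)]
        exact Finset.sum_congr rfl fun r _ =>
          (MeasureTheory.integral_finset_sum _ fun s _ => hint r s).symm
    _ ≤ 0 := by
        refine MeasureTheory.integral_nonpos fun t => ?_
        have hpt : ∑ r, ∑ s, c r * c s * SS (n r) (n s) (B r) (B s) (Y r) (Y s) t
            = -2 * (∑ r, c r * QF (n r) (B r) (Y r) t) ^ 2 := by
          rw [← cnd_pointwise c (fun r => QF (n r) (B r) (Y r) t) hc]
          refine Finset.sum_congr rfl fun r _ => Finset.sum_congr rfl fun s _ => ?_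
          rw [SS_pointwise (hn r) (hn s) (hBnn r) (hBnn s) (hBc r) (hBc s) t]
        show ∑ r, ∑ s, c r * c s * SS (n r) (n s) (B r) (B s) (Y r) (Y s) t ≤ 0
        rw [hpt]
        nlinarith [sq_nonneg (∑ r, c r * QF (n r) (B r) (Y r) t)]

end CNDAux
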